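/- arXiv:1108.0209 — 3 statements merged into one kernel-verified Lean document; each statement's English description precedes it below -/
import Mathlib

section
/- Let K be a finite field, n a positive integer, and f : K^n → K^n a map whose dependency graph is acyclic (it contains no directed cycles, including no self-loops). Then f has a unique fixed point: there exists exactly one x₀ ∈ K^n with f(x₀) = x₀. -/
/-- The coordinate function `h : K^n → K` depends on variable `x_j`. -/
def DependsOnVar {n : ℕ} {K : Type*} (h : (Fin n → K) → K) (j : Fin n) : Prop :=
  ∃ (x : Fin n → K) (p q : K), p ≠ q ∧
    h (Function.update x j p) ≠ h (Function.update x j q)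

/-- The dependency graph of `f : K^n → K^n` has an edge from `j` to `i`
iff the `i`-th coordinate function of `f` depends on `x_j`. -/
def DepEdge {n : ℕ} {K : Type*} (f : (Fin n → K) → (Fin n → K)) (j i : Fin n) : Prop :=
  DependsOnVar (fun x => f x i) j

/-- The dependency graph of `f` is acyclic: there is no directed cycle
(of any length `m ≥ 1`, in particular no self-loop). -/
def DepAcyclic {n : ℕ} {K : Type*} (f : (Fin n → K) → (Fin n → K)) : Prop :=
  ¬ ∃ (m : ℕ) (v : ℕ → Fin n), 1 ≤ m ∧ v 0 = v m ∧
      ∀ t < m, DepEdge f (v t) (v (t + 1))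

/-- Locality: a function's value depends only on the coordinates it depends on. -/
lemma agree_aux {n : ℕ} {K : Type*} (h : (Fin n → K) → K) :
    ∀ (s : Finset (Fin n)) (x y : Fin n → K),
      (∀ j, DependsOnVar h j → x j = y j) → (∀ j, x j ≠ y j → j ∈ s) → h x = h y := by
  classical
  intro s
  induction s using Finset.strongInduction with
  | _ s ih =>
    intro x y H Hs
    by_cases hxy : ∀ j, x j = y j
    · exact congrArg h (funext hxy)
    · push_neg at hxy
      obtain ⟨j, hj⟩ := hxy
      have hjs : j ∈ s := Hs j hj
      have hnd : ¬ DependsOnVar h j := fun d => hj (H j d)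
      have h1 : h x = h (Function.update x j (y j)) := by
        by_contra hne
        exact hnd ⟨x, x j, y j, hj, by
          simpa [Function.update_eq_self] using hne⟩
      rw [h1]
      refine ih (s.erase j) (Finset.erase_ssubset hjs) _ y ?_ ?_
      · intro k dk
        rcases eq_or_ne k j with rfl | hk
        · simp
        · rw [Function.update_of_ne hk]; exact H k dk
      · intro k hk
        rcases eq_or_ne k j with rfl | hk'
        · simp at hk
        · rw [Function.update_of_ne hk'] at hk
          exact Finset.mem_erase.mpr ⟨hk', Hs k hk⟩

/-- From a `TransGen` chain we can extract an explicit path. -/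
lemma exists_path {α : Type*} {r : α → α → Prop} {a b : α}
    (h : Relation.TransGen r a b) :
    ∃ (m : ℕ) (v : ℕ → α), 1 ≤ m ∧ v 0 = a ∧ v m = b ∧
      ∀ t < m, r (v t) (v (t + 1)) := by
  induction h with
  | @single b' hab =>
    refine ⟨1, fun t => if t = 0 then a else b', le_refl 1, by simp, by simp, ?_⟩
    intro t ht
    interval_cases t
    simpa using hab
  | @tail b' c hab hbc ih =>
    obtain ⟨m, v, hm, h0, hmb, hstep⟩ := ih
    refine ⟨m + 1, fun t => if t ≤ m then v t else c, by omega, by simpa using h0, by simp, ?_⟩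
    intro t ht
    rcases lt_or_eq_of_le (Nat.lt_succ_iff.mp ht) with h' | h'
    · simp only [show t ≤ m by omega, show t + 1 ≤ m by omega, if_true]
      exact hstep t h'
    · subst h'
      simp only [le_refl, if_true, show ¬ (t + 1 ≤ t) by omega, if_false]
      rw [hmb]; exact hbc

/-- A map `f : K^n → K^n` over a finite field with acyclic dependency graph
has a unique fixed point. -/
theorem unique_fixed_point_of_acyclic {K : Type*} [Field K] [Fintype K] {n : ℕ}
    (hn : 0 < n) (f : (Fin n → K) → (Fin n → K)) (hf : DepAcyclic f) :
    ∃! x₀ : Fin n → K, f x₀ = x₀ := by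
  classical
  set r : Fin n → Fin n → Prop := DepEdge f with hr
  have hirr : ∀ i, ¬ Relation.TransGen r i i := by
    intro i hti
    obtain ⟨m, v, hm, h0, hmb, hstep⟩ := exists_path hti
    exact hf ⟨m, v, hm, by rw [h0, hmb], hstep⟩
  let ρ : Fin n → ℕ :=
    fun i => (Finset.univ.filter (fun j => Relation.TransGen r j i)).card
  have hmono : ∀ j i, r j i → ρ j < ρ i := by
    intro j i hji
    apply Finset.card_lt_card
    rw [Finset.ssubset_iff_of_subset]
    · exact ⟨j, by simp [Relation.TransGen.single hji], by simp [hirr j]⟩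
    · intro k hk
      simp only [Finset.mem_filter, Finset.mem_univ, true_and] at hk ⊢
      exact hk.tail hji
  have hbound : ∀ i, ρ i < n := by
    intro i
    show (Finset.univ.filter (fun j => Relation.TransGen r j i)).card < n
    have hsub : (Finset.univ.filter (fun j => Relation.TransGen r j i))
        ⊆ Finset.univ.erase i := by
      intro k hk
      simp only [Finset.mem_filter, Finset.mem_univ, true_and] at hk
      refine Finset.mem_erase.mpr ⟨?_, Finset.mem_univ k⟩
      rintro rfl; exact hirr k hk
    have := Finset.card_le_card hsub
    have hcard : (Finset.univ.erase i).card = n - 1 := by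
      rw [Finset.card_erase_of_mem (Finset.mem_univ i)]
      simp
    omega
  have key : ∀ k i, ρ i < k → ∀ x y, f^[k] x i = f^[k] y i := by
    intro k
    induction k with
    | zero => omega
    | succ k ih =>
      intro i hi x y
      rw [Function.iterate_succ_apply', Function.iterate_succ_apply']
      refine agree_aux (fun z => f z i) Finset.univ _ _ ?_ (fun j _ => Finset.mem_univ j)
      intro j hdep
      have hji : r j i := hdep
      exact ih j (by have := hmono j i hji; omega) x y
  have hconst : ∀ x y, f^[n] x = f^[n] y :=
    fun x y => funext fun i => key n i (hbound i) x y
  set c : Fin n → K := f^[n] (fun _ => 0) with hc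
  have hfix : f c = c := by
    have h1 : f (f^[n] (fun _ => 0)) = f^[n] (f (fun _ => 0)) :=
      (Function.iterate_succ_apply' f n _).symm.trans (Function.iterate_succ_apply f n _)
    rw [hc, h1]
    exact hconst _ _
  refine ⟨c, hfix, ?_⟩
  intro y hy
  have h2 : f^[n] y = y := Function.iterate_fixed hy n
  rw [← h2, hc]
  exact hconst y _
end

section
/- Let K be a finite field, n a positive integer, f : K^n → K^n, and r ≥ 1. Suppose the dependency graph of f contains no directed walk of length r (equivalently, the r-fold max–min power of the dependency matrix of f is the zero matrix). Then f^r is a constant map, and consequently every state reaches the unique fixed point x₀ of f in at most r steps: f^r(x) = x₀ for all x ∈ K^n. -/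
/-- Hybrid argument: if `h a ≠ h b`, then `h` depends on some coordinate
where `a` and `b` differ. -/
lemma exists_dep_of_ne {n : ℕ} {K : Type*} (h : (Fin n → K) → K) :
    ∀ a b : Fin n → K, h a ≠ h b → ∃ k, a k ≠ b k ∧ DependsOnVar h k := by
  classical
  have key : ∀ m : ℕ, ∀ a b : Fin n → K,
      (Finset.univ.filter (fun k => a k ≠ b k)).card ≤ m →
      h a ≠ h b → ∃ k, a k ≠ b k ∧ DependsOnVar h k := by
    intro m
    induction m with
    | zero =>
        intro a b hcard hne
        exfalso
        apply hne
        have hab : a = b := by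
          funext k
          by_contra hk
          have hmem : k ∈ Finset.univ.filter (fun k => a k ≠ b k) := by simp [hk]
          have := Finset.card_pos.mpr ⟨k, hmem⟩
          omega
        rw [hab]
    | succ m ih =>
        intro a b hcard hne
        have hab : a ≠ b := fun h' => hne (by rw [h'])
        obtain ⟨k, hk⟩ : ∃ k, a k ≠ b k := by
          by_contra h'
          push_neg at h'
          exact hab (funext h')
        by_cases hcase : h (Function.update a k (b k)) = h a
        · have hne' : h (Function.update a k (b k)) ≠ h b := by rw [hcase]; exact hne
          have hsub : (Finset.univ.filter
              (fun k' => Function.update a k (b k) k' ≠ b k')) ⊆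
              (Finset.univ.filter (fun k' => a k' ≠ b k')).erase k := by
            intro k' hk'
            simp only [Finset.mem_filter, Finset.mem_univ, true_and] at hk'
            rcases eq_or_ne k' k with rfl | hkk
            · simp [Function.update_self] at hk'
            · simp only [Finset.mem_erase, Finset.mem_filter, Finset.mem_univ, true_and]
              refine ⟨hkk, ?_⟩
              rwa [Function.update_of_ne hkk] at hk'
          have hcard' : (Finset.univ.filter
              (fun k' => Function.update a k (b k) k' ≠ b k')).card ≤ m := by
            have h1 := Finset.card_le_card hsub
            have h2 : ((Finset.univ.filter (fun k' => a k' ≠ b k')).erase k).card <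
                (Finset.univ.filter (fun k' => a k' ≠ b k')).card := by
              apply Finset.card_erase_lt_of_mem
              simp [hk]
            omega
          obtain ⟨k', hk'1, hk'2⟩ := ih _ _ hcard' hne'
          refine ⟨k', ?_, hk'2⟩
          rcases eq_or_ne k' k with rfl | hkk
          · simp [Function.update_self] at hk'1
          · rwa [Function.update_of_ne hkk] at hk'1
        · exact ⟨k, hk, a, b k, a k, Ne.symm hk, by rwa [Function.update_eq_self]⟩
  intro a b hne
  exact key _ a b le_rfl hne

/-- If coordinate `i` of `f^[r]` depends on `x_j`, there is a walk of length
`r` from `j` to `i` in the dependency graph. -/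
lemma walk_of_iterate_depends {n : ℕ} {K : Type*} (f : (Fin n → K) → (Fin n → K)) :
    ∀ r (i j : Fin n), DependsOnVar (fun x => (f^[r]) x i) j →
      ∃ v : ℕ → Fin n, v 0 = j ∧ v r = i ∧ ∀ t < r, DepEdge f (v t) (v (t + 1)) := by
  intro r
  induction r with
  | zero =>
      intro i j hdep
      obtain ⟨x, p, q, hpq, hne⟩ := hdep
      simp only [Function.iterate_zero, id_eq] at hne
      have hij : i = j := by
        by_contra hij
        rw [Function.update_of_ne hij, Function.update_of_ne hij] at hne
        exact hne rfl
      subst hij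
      exact ⟨fun _ => i, rfl, rfl, fun t ht => absurd ht (by omega)⟩
  | succ r ih =>
      intro i j hdep
      obtain ⟨x, p, q, hpq, hne⟩ := hdep
      simp only [Function.iterate_succ_apply'] at hne
      obtain ⟨k, hk, hedge⟩ := exists_dep_of_ne (fun y => f y i)
        ((f^[r]) (Function.update x j p)) ((f^[r]) (Function.update x j q)) hne
      obtain ⟨v, hv0, hvr, hve⟩ := ih k j ⟨x, p, q, hpq, hk⟩
      refine ⟨fun t => if t < r + 1 then v t else i, by simp [hv0], by simp, ?_⟩
      intro t ht
      rcases Nat.lt_or_ge t r with ht' | ht'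
      · have h1 : t < r + 1 := by omega
        have h2 : t + 1 < r + 1 := by omega
        simp only [if_pos h1, if_pos h2]
        exact hve t ht'
      · have heq : t = r := by omega
        subst heq
        simp only [if_pos (Nat.lt_succ_self t), if_neg (lt_irrefl (t + 1)), hvr]
        exact hedge
  
/-- If the dependency graph of `f : K^n → K^n` contains no directed walk of
length `r` (equivalently, the `r`-th max–min power of its dependency matrix is
zero), then `f^r` is a constant map; consequently every state reaches the
unique fixed point `x₀` of `f` in at most `r` steps. -/
theorem reaches_fixed_point_of_no_walk {K : Type*} [Field K] [Fintype K] {n : ℕ}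
    (hn : 0 < n) (f : (Fin n → K) → (Fin n → K)) (r : ℕ) (hr : 1 ≤ r)
    (hwalk : ¬ ∃ v : ℕ → Fin n, ∀ t < r, DepEdge f (v t) (v (t + 1))) :
    ∃ x₀ : Fin n → K, f x₀ = x₀ ∧ (∀ y : Fin n → K, f y = y → y = x₀) ∧
      ∀ x : Fin n → K, (f^[r]) x = x₀ := by
  classical
  have hconst : ∀ x y : Fin n → K, (f^[r]) x = (f^[r]) y := by
    intro x y
    funext i
    by_contra hne
    obtain ⟨k, _, hdep⟩ := exists_dep_of_ne (fun z => (f^[r]) z i) x y hne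
    obtain ⟨v, _, _, hve⟩ := walk_of_iterate_depends f r i k hdep
    exact hwalk ⟨v, hve⟩
  set c : Fin n → K := fun _ => 0 with hc
  refine ⟨(f^[r]) c, ?_, ?_, fun x => hconst x c⟩
  · calc f ((f^[r]) c) = (f^[r]) (f c) :=
          (Function.iterate_succ_apply' f r c).symm.trans (Function.iterate_succ_apply f r c)
      _ = (f^[r]) c := hconst _ _
  · intro y hy
    have h1 : (f^[r]) y = y := Function.iterate_fixed hy r
    rw [← h1]
    exact hconst y c
end

section
/- Consider the triangular ODE system x_i′(t) = f_i(x_1(t), …, x_{i−1}(t)) − k_i·x_i(t) for i = 1, …, n, where each f_i : ℝ^{i−1} → ℝ is continuous (f_1 is a constant) and each k_i > 0. Define s = (s_1, …, s_n) recursively by s_i = f_i(s_1, …, s_{i−1})/k_i. Then every differentiable solution x : [0, ∞) → ℝⁿ of the system satisfies lim_{t→∞} x(t) = s, regardless of the initial condition x(0). -/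
open Filter Real

open Set in
private lemma lin_ode_tendsto {k : ℝ} (hk : 0 < k) {g y : ℝ → ℝ} {c : ℝ}
    (hg : Tendsto g atTop (nhds c))
    (hy : ∀ t ∈ Set.Ici (0:ℝ), HasDerivWithinAt y (g t - k * y t) (Set.Ici 0) t) :
    Tendsto y atTop (nhds (c / k)) := by
  set L := c / k with hL
  have hkL : k * L = c := by rw [hL]; field_simp [hk.ne']
  have hycont : ContinuousOn y (Ici 0) := fun t ht => (hy t ht).continuousWithinAt
  rw [Metric.tendsto_atTop]
  intro ε hε
  set δ := ε / 4 with hδdef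
  have hδ : 0 < δ := by positivity
  obtain ⟨T₀, hT₀⟩ := Metric.tendsto_atTop.1 hg (k * δ) (by positivity)
  set T := max T₀ 0 with hTdef
  have hT0 : (0:ℝ) ≤ T := le_max_right _ _
  have hgT : ∀ t, T ≤ t → |g t - c| < k * δ := fun t ht => by
    have := hT₀ t (le_trans (le_max_left _ _) ht)
    rwa [Real.dist_eq] at this
  have hyderiv : ∀ t ∈ Ioi T, HasDerivAt y (g t - k * y t) t := by
    intro t ht
    have ht0 : (0:ℝ) < t := lt_of_le_of_lt hT0 ht
    exact (hy t (le_of_lt ht0)).hasDerivAt (Ici_mem_nhds ht0)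
  have hexp : ∀ t : ℝ, HasDerivAt (fun u => Real.exp (k*u)) (k * Real.exp (k*t)) t := by
    intro t
    exact ((Real.hasDerivAt_exp (k*t)).comp t ((hasDerivAt_id t).const_mul k)).congr_deriv (by simp [mul_comm])
  -- derivative of the shifted exponentials
  have hF : ∀ η : ℝ, ∀ t ∈ Ioi T,
      HasDerivAt (fun u => Real.exp (k*u) * (y u - L - η))
        (Real.exp (k*t) * ((g t - c) - k*η)) t := by
    intro η t ht
    have h2 : HasDerivAt (fun u => y u - L - η) (g t - k * y t) t :=
      ((hyderiv t ht).sub_const L).sub_const η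
    have := (hexp t).mul h2
    refine this.congr_deriv ?_
    rw [← hkL]; ring
  have hcontF : ∀ η : ℝ, ContinuousOn (fun u => Real.exp (k*u) * (y u - L - η)) (Ici T) := by
    intro η
    exact ((Real.continuous_exp.comp (continuous_const.mul continuous_id)).continuousOn).mul
      (((hycont.mono (Ici_subset_Ici.2 hT0)).sub continuousOn_const).sub continuousOn_const)
  have he : ∀ t : ℝ, (0:ℝ) < Real.exp (k*t) := fun t => Real.exp_pos _
  -- upper estimate
  have hanti : AntitoneOn (fun u => Real.exp (k*u) * (y u - L - δ)) (Ici T) := by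
    apply antitoneOn_of_deriv_nonpos (convex_Ici T) (hcontF δ)
    · rw [interior_Ici]
      exact fun t ht => (hF δ t ht).differentiableAt.differentiableWithinAt
    · rw [interior_Ici]
      intro t ht
      rw [(hF δ t ht).deriv]
      have h1 := (abs_lt.1 (hgT t (le_of_lt ht))).2
      nlinarith [he t]
  have hmono : MonotoneOn (fun u => Real.exp (k*u) * (y u - L + δ)) (Ici T) := by
    have : (fun u => Real.exp (k*u) * (y u - L + δ)) =
        (fun u => Real.exp (k*u) * (y u - L - (-δ))) := by funext u; ring_nf
    rw [this]
    apply monotoneOn_of_deriv_nonneg (convex_Ici T) (hcontF (-δ))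
    · rw [interior_Ici]
      exact fun t ht => (hF (-δ) t ht).differentiableAt.differentiableWithinAt
    · rw [interior_Ici]
      intro t ht
      rw [(hF (-δ) t ht).deriv]
      have h1 := (abs_lt.1 (hgT t (le_of_lt ht))).1
      nlinarith [he t]
  set C := |y T - L| + δ with hCdef
  have hC : 0 < C := by positivity
  have hbound : ∀ t, T ≤ t → |y t - L| ≤ δ + Real.exp (k*T - k*t) * C := by
    intro t ht
    have hEdef : Real.exp (k*T - k*t) = Real.exp (k*T) / Real.exp (k*t) := Real.exp_sub _ _
    have hE0 : 0 ≤ Real.exp (k*T - k*t) := (Real.exp_pos _).le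
    have hup : y t - L - δ ≤ Real.exp (k*T - k*t) * (y T - L - δ) := by
      have h := hanti (self_mem_Ici) ht ht
      simp only at h
      rw [hEdef, div_mul_eq_mul_div, le_div_iff₀ (he t)]
      nlinarith [h]
    have hlo : Real.exp (k*T - k*t) * (y T - L + δ) ≤ y t - L + δ := by
      have h := hmono (self_mem_Ici) ht ht
      simp only at h
      rw [hEdef, div_mul_eq_mul_div, div_le_iff₀ (he t)]
      nlinarith [h]
    have h1 : y T - L - δ ≤ C := by
      have := le_abs_self (y T - L); simp [hCdef]; linarith
    have h2 : -C ≤ y T - L + δ := by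
      have := neg_abs_le (y T - L); simp [hCdef]; linarith
    have h3 : Real.exp (k*T - k*t) * (y T - L - δ) ≤ Real.exp (k*T - k*t) * C :=
      mul_le_mul_of_nonneg_left h1 hE0
    have h4 : Real.exp (k*T - k*t) * (-C) ≤ Real.exp (k*T - k*t) * (y T - L + δ) :=
      mul_le_mul_of_nonneg_left h2 hE0
    rw [abs_le]
    constructor <;> nlinarith
  -- the exponential tail tends to 0
  have htail : Tendsto (fun t => Real.exp (k*T - k*t) * C) atTop (nhds 0) := by
    have h1 : Tendsto (fun t : ℝ => k * t) atTop atTop :=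
      Tendsto.const_mul_atTop hk tendsto_id
    have h2 : Tendsto (fun t : ℝ => k*T - k*t) atTop atBot := by
      simpa [sub_eq_add_neg] using tendsto_atBot_add_const_left atTop (k*T) (tendsto_neg_atBot_iff.2 h1)
    have h3 : Tendsto (fun t : ℝ => Real.exp (k*T - k*t)) atTop (nhds 0) :=
      Real.tendsto_exp_atBot.comp h2
    simpa using h3.mul_const C
  obtain ⟨N, hN⟩ := eventually_atTop.1 (htail.eventually (gt_mem_nhds hδ))
  refine ⟨max N T, fun t ht => ?_⟩
  have h1 := hbound t (le_trans (le_max_right _ _) ht)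
  have h2 := hN t (le_trans (le_max_left _ _) ht)
  rw [Real.dist_eq]
  calc |y t - L| ≤ δ + Real.exp (k*T - k*t) * C := h1
    _ < δ + δ := by linarith
    _ < ε := by rw [hδdef]; linarith

/-- For the triangular ODE system `x_i′ = f_i(x_1, …, x_{i−1}) − k_i·x_i` with
each `f_i` continuous and each `k_i > 0`, every differentiable solution
converges, regardless of the initial condition, to the point `s` defined
recursively by `s_i = f_i(s_1, …, s_{i−1}) / k_i`. -/
theorem triangular_ode_tendsto {n : ℕ}
    (f : (i : Fin n) → ((Fin i.val → ℝ) → ℝ))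
    (hf : ∀ i, Continuous (f i))
    (k : Fin n → ℝ) (hk : ∀ i, 0 < k i)
    (s : Fin n → ℝ)
    (hs : ∀ i, s i = f i (fun j => s (Fin.castLE i.isLt.le j)) / k i)
    (x : ℝ → (Fin n → ℝ))
    (hx : ∀ (i : Fin n), ∀ t ∈ Set.Ici (0 : ℝ),
      HasDerivWithinAt (fun u => x u i)
        (f i (fun j => x t (Fin.castLE i.isLt.le j)) - k i * x t i)
        (Set.Ici 0) t) :
    Tendsto x atTop (nhds s) := by
  have H : ∀ m : ℕ, ∀ i : Fin n, i.val < m →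
      Tendsto (fun t => x t i) atTop (nhds (s i)) := by
    intro m
    induction m with
    | zero => exact fun i hi => absurd hi (Nat.not_lt_zero _)
    | succ m ih =>
      intro i hi
      have hcoord : ∀ j : Fin i.val,
          Tendsto (fun t => x t (Fin.castLE i.isLt.le j)) atTop
            (nhds (s (Fin.castLE i.isLt.le j))) := by
        intro j
        exact ih _ (lt_of_lt_of_le j.isLt (Nat.lt_succ_iff.1 hi))
      have hgt : Tendsto (fun t => f i (fun j => x t (Fin.castLE i.isLt.le j))) atTop
          (nhds (f i (fun j => s (Fin.castLE i.isLt.le j)))) :=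
        ((hf i).tendsto _).comp (tendsto_pi_nhds.2 hcoord)
      have := lin_ode_tendsto (hk i) hgt (hx i)
      rwa [← hs i] at this
  exact tendsto_pi_nhds.2 fun i => H (i.val + 1) i (Nat.lt_succ_self _)
end
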